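/- With Horner's perturbed recursion, the computed value satisfies the exact error expansion fl(P(x)) − P(x) = Σ_{i=0}^{n} a_i x^i (φ_i − 1), where φ_i = Π_{k=2n−2i}^{2n} (1+δ_k) for 0 ≤ i ≤ n−1 and φ_n = Π_{k=1}^{2n} (1+δ_k). -/

import Mathlib

/-- Exact error expansion for Horner's perturbed recursion:
`fl(P(x)) − P(x) = Σ_{i=0}^n a_i x^i (φ_i − 1)` where
`φ_i = Π_{k=2n−2i}^{2n} (1+δ_k)` for `i ≤ n−1` and `φ_n = Π_{k=1}^{2n} (1+δ_k)`
(both covered by the lower index `max 1 (2n−2i)`). -/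
theorem stmt_7 (n : ℕ) (hn : 1 ≤ n) (x : ℝ) (a : ℕ → ℝ) (u : ℝ) (hu : 0 < u)
    (δ : ℕ → ℝ) (hδ : ∀ k, 1 ≤ k → k ≤ 2 * n → |δ k| ≤ u)
    (rhat : ℕ → ℝ) (h0 : rhat 0 = a n)
    (hodd : ∀ k, 1 ≤ k → k ≤ n →
      rhat (2 * k - 1) = rhat (2 * k - 2) * x * (1 + δ (2 * k - 1)))
    (heven : ∀ k, 1 ≤ k → k ≤ n →
      rhat (2 * k) = (rhat (2 * k - 1) + a (n - k)) * (1 + δ (2 * k))) :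
    rhat (2 * n) - ∑ i ∈ Finset.range (n + 1), a i * x ^ i
      = ∑ i ∈ Finset.range (n + 1), a i * x ^ i *
          ((∏ k ∈ Finset.Icc (max 1 (2 * n - 2 * i)) (2 * n), (1 + δ k)) - 1) := by
  have key : ∀ m, m ≤ n → rhat (2 * m)
      = ∑ j ∈ Finset.range (m + 1), a (n - m + j) * x ^ j *
          ∏ k ∈ Finset.Icc (max 1 (2 * m - 2 * j)) (2 * m), (1 + δ k) := by
    intro m
    induction m with
    | zero => intro _; simp [h0]
    | succ m ih =>
      intro hm
      have hm' : m ≤ n := Nat.le_of_succ_le hm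
      have hodd' := hodd (m + 1) (Nat.succ_le_succ (Nat.zero_le m)) hm
      have heven' := heven (m + 1) (Nat.succ_le_succ (Nat.zero_le m)) hm
      have e1 : 2 * (m + 1) - 1 = 2 * m + 1 := by omega
      have e2 : 2 * (m + 1) - 2 = 2 * m := by omega
      have e3 : 2 * (m + 1) = 2 * m + 2 := by omega
      rw [e1, e2] at hodd'
      rw [e1, e3] at heven'
      rw [e3, heven', hodd', ih hm']
      have hterm : ∀ j ∈ Finset.range (m + 1),
          a (n - (m + 1) + (j + 1)) * x ^ (j + 1) *
            ∏ k ∈ Finset.Icc (max 1 (2 * m + 2 - 2 * (j + 1))) (2 * m + 2), (1 + δ k)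
          = (a (n - m + j) * x ^ j *
              ∏ k ∈ Finset.Icc (max 1 (2 * m - 2 * j)) (2 * m), (1 + δ k)) *
            (x * ((1 + δ (2 * m + 1)) * (1 + δ (2 * m + 2)))) := by
        intro j hj
        have hidx : n - (m + 1) + (j + 1) = n - m + j := by omega
        have hb : 2 * m + 2 - 2 * (j + 1) = 2 * m - 2 * j := by omega
        have hle1 : max 1 (2 * m - 2 * j) ≤ 2 * m + 1 := max_le (by omega) (by omega)
        have hle2 : max 1 (2 * m - 2 * j) ≤ (2 * m + 1) + 1 := max_le (by omega) (by omega)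
        rw [hidx, hb, show 2 * m + 2 = (2 * m + 1) + 1 from rfl,
          Finset.prod_Icc_succ_top hle2, Finset.prod_Icc_succ_top hle1]
        ring
      have hR : (∑ j ∈ Finset.range (m + 1 + 1), a (n - (m + 1) + j) * x ^ j *
            ∏ k ∈ Finset.Icc (max 1 (2 * m + 2 - 2 * j)) (2 * m + 2), (1 + δ k))
          = (∑ j ∈ Finset.range (m + 1), a (n - m + j) * x ^ j *
              ∏ k ∈ Finset.Icc (max 1 (2 * m - 2 * j)) (2 * m), (1 + δ k)) *
            (x * ((1 + δ (2 * m + 1)) * (1 + δ (2 * m + 2)))) +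
            a (n - (m + 1)) * (1 + δ (2 * m + 2)) := by
        rw [Finset.sum_range_succ', Finset.sum_congr rfl hterm, ← Finset.sum_mul]
        have hf0 : max 1 (2 * m + 2 - 2 * 0) = 2 * m + 2 := max_eq_right (by omega)
        rw [hf0, Finset.Icc_self, Finset.prod_singleton,
          show n - (m + 1) + 0 = n - (m + 1) from by omega]
        ring
      rw [hR]
      ring
  have hk := key n le_rfl
  simp only [Nat.sub_self, Nat.zero_add] at hk
  rw [hk, ← Finset.sum_sub_distrib]
  exact Finset.sum_congr rfl fun i _ => by ring
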